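/- With T_k the normalized Chebyshev polynomial satisfying T_k(z + 1/z) = z^k + z^{-k}, the number of complex fixed points of T_k (counted as a set) is exactly k, for every integer k ≥ 2. -/

import Mathlib

open Polynomial Real Finset in
private lemma aux_dickson_monic_deg : ∀ n : ℕ,
    (dickson 1 (1:ℂ) (n+1)).Monic ∧ (dickson 1 (1:ℂ) (n+1)).natDegree = n + 1 := by
  intro n
  induction n using Nat.strong_induction_on with
  | _ n ih =>
    match n with
    | 0 => simpa [dickson_one] using monic_X
    | 1 =>
      rw [dickson_two]
      have h2 : C (1:ℂ) * ((3:ℂ[X]) - ((1:ℕ):ℂ[X])) = C 2 := by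
        simp only [Nat.cast_one, C_1, one_mul]
        rw [show (3:ℂ[X]) = C 3 from (map_ofNat C 3).symm, show (1:ℂ[X]) = C 1 from C_1.symm, ← C_sub]
        norm_num
      rw [h2]
      refine ⟨?_, ?_⟩
      · exact monic_X_pow_sub (p := C (2:ℂ)) (n := 2) (lt_of_le_of_lt degree_C_le (by norm_num : (0:WithBot ℕ) < ((2:ℕ):WithBot ℕ)))
      · rw [natDegree_sub_eq_left_of_natDegree_lt] <;> simp
    | (n+2) =>
      obtain ⟨h1m, h1d⟩ := ih (n+1) (by omega)
      obtain ⟨h0m, h0d⟩ := ih n (by omega)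
      rw [show n+2+1 = (n+1)+2 by ring, dickson_add_two]
      have hXm : (X * dickson 1 (1:ℂ) (n+2)).Monic := monic_X.mul h1m
      have hXd : (X * dickson 1 (1:ℂ) (n+2)).natDegree = n + 3 := by
        rw [natDegree_mul X_ne_zero h1m.ne_zero, natDegree_X, h1d]; ring
      have hlt : (C (1:ℂ) * dickson 1 (1:ℂ) (n+1)).natDegree < (X * dickson 1 (1:ℂ) (n+2)).natDegree := by
        rw [hXd]
        calc (C (1:ℂ) * dickson 1 (1:ℂ) (n+1)).natDegree ≤ (dickson 1 (1:ℂ) (n+1)).natDegree := by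
              simpa using natDegree_mul_le
          _ < n + 3 := by omega
      constructor
      · exact hXm.sub_of_left (by
          apply degree_lt_degree
          rwa [hXd] at hlt ⊢)
      · rw [natDegree_sub_eq_left_of_natDegree_lt hlt, hXd]

open Polynomial in
private lemma aux_map_eq_dickson (k : ℕ) (f : Polynomial ℤ)
    (hf : ∀ z : ℂ, z ≠ 0 → f.eval₂ (Int.castRingHom ℂ) (z + z⁻¹) = z ^ k + z⁻¹ ^ k) :
    f.map (Int.castRingHom ℂ) = dickson 1 (1:ℂ) k := by
  apply Polynomial.funext
  intro x
  obtain ⟨s, hs⟩ : ∃ s : ℂ, s ^ 2 = x ^ 2 - 4 := IsAlgClosed.exists_pow_nat_eq _ (n := 2) (by norm_num)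
  set z : ℂ := (x + s) / 2 with hzdef
  have hz2 : z * ((x - s) / 2) = 1 := by
    rw [hzdef]; field_simp; linear_combination -hs
  have hz0 : z ≠ 0 := left_ne_zero_of_mul_eq_one hz2
  have hinv : z⁻¹ = (x - s) / 2 := (eq_inv_of_mul_eq_one_left (by rw [mul_comm]; exact hz2)).symm
  have hx : z + z⁻¹ = x := by rw [hinv, hzdef]; ring
  rw [eval_map, ← hx, hf z hz0,
    dickson_one_one_eval_add_inv z z⁻¹ (mul_inv_cancel₀ hz0)]

open Real in
private lemma aux_exp_root_unity (n : ℕ) (hn : n ≠ 0) (m : ℕ) :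
    (Complex.exp (2 * (π:ℝ) * ((m:ℝ)/(n:ℝ)) * Complex.I)) ^ n = 1 := by
  rw [← Complex.exp_nat_mul]
  have h : (n:ℂ) * (2 * (π:ℝ) * ((m:ℝ)/(n:ℝ)) * Complex.I) = (m:ℂ) * (2 * π * Complex.I) := by
    have hn' : ((n:ℂ)) ≠ 0 := Nat.cast_ne_zero.mpr hn
    push_cast
    field_simp
  rw [h]
  have := Complex.exp_int_mul_two_pi_mul_I (m : ℤ)
  simpa using this

private lemma aux_two_cos_eq (θ : ℝ) :
    ((2 * Real.cos θ : ℝ) : ℂ) = Complex.exp ((θ:ℂ) * Complex.I) + (Complex.exp ((θ:ℂ) * Complex.I))⁻¹ := by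
  rw [← Complex.exp_neg]
  push_cast [Complex.ofReal_cos]
  rw [Complex.cos]
  ring

open Polynomial in
private lemma aux_dickson_fix (k : ℕ) (hk : 2 ≤ k) (z : ℂ) (hz : z ≠ 0)
    (h : z ^ (k-1) = 1 ∨ z ^ (k+1) = 1) :
    (dickson 1 (1:ℂ) k).eval (z + z⁻¹) = z + z⁻¹ := by
  rw [dickson_one_one_eval_add_inv z z⁻¹ (mul_inv_cancel₀ hz)]
  rcases h with h | h
  · have hzk : z ^ k = z := by
      rw [show k = (k-1) + 1 by omega, pow_succ, h, one_mul]
    rw [hzk, inv_pow, hzk]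
  · have hzk : z ^ k = z⁻¹ := by
      have : z ^ k * z = 1 := by rw [← pow_succ, h]
      exact eq_inv_of_mul_eq_one_left ((mul_comm (z^k) z) ▸ this)
    rw [inv_pow, hzk, inv_inv, add_comm]

open Real Finset in
private lemma aux_Scard (k : ℕ) (hk : 2 ≤ k) :
    (((Finset.range ((k+1)/2+1)).image fun m : ℕ => (m:ℝ)/(k+1)) ∪
     ((Finset.Icc 1 ((k-2)/2)).image fun m : ℕ => (m:ℝ)/(k-1))).card = k := by
  have hk1 : ((k:ℝ) + 1) ≠ 0 := by positivity
  have hk1' : ((k:ℝ) - 1) ≠ 0 := by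
    have : (2:ℝ) ≤ (k:ℝ) := by exact_mod_cast hk
    intro h; linarith
  have hinj1 : Set.InjOn (fun m : ℕ => (m:ℝ)/(k+1)) (Finset.range ((k+1)/2+1)) := by
    intro a _ b _ h
    simp only at h
    have : (a:ℝ) = b := by field_simp at h; exact_mod_cast h
    exact_mod_cast this
  have hinj2 : Set.InjOn (fun m : ℕ => (m:ℝ)/(k-1)) (Finset.Icc 1 ((k-2)/2)) := by
    intro a _ b _ h
    simp only at h
    have : (a:ℝ) = b := by field_simp at h; exact_mod_cast h
    exact_mod_cast this
  have hdisj : Disjoint ((Finset.range ((k+1)/2+1)).image fun m : ℕ => (m:ℝ)/(k+1))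
      ((Finset.Icc 1 ((k-2)/2)).image fun m : ℕ => (m:ℝ)/(k-1)) := by
    rw [Finset.disjoint_left]
    rintro q hq1 hq2
    obtain ⟨m, hm, rfl⟩ := Finset.mem_image.mp hq1
    obtain ⟨m', hm', he⟩ := Finset.mem_image.mp hq2
    simp only [Finset.mem_range, Finset.mem_Icc] at hm hm'
    have heq : (m':ℝ) * (k+1) = (m:ℝ) * (k-1) := by
      field_simp at he
      linarith [he]
    have h1 : (1:ℝ) ≤ m' := by exact_mod_cast hm'.1
    have h2 : 2 * (m':ℝ) + 2 ≤ k := by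
      have : 2 * m' + 2 ≤ k := by omega
      exact_mod_cast this
    rcases le_or_gt m m' with h | h
    · have hr : (m:ℝ) ≤ m' := by exact_mod_cast h
      nlinarith [heq]
    · have hr : (m':ℝ) + 1 ≤ m := by exact_mod_cast h
      nlinarith [heq]
  rw [Finset.card_union_of_disjoint hdisj, Finset.card_image_of_injOn hinj1,
    Finset.card_image_of_injOn hinj2, Finset.card_range, Nat.card_Icc]
  omega

open Polynomial Real Finset in
/-- The normalized Chebyshev polynomial `T_k` (with `T_k(z + 1/z) = z^k + z^{-k}`)
has exactly `k` complex fixed points, for every `k ≥ 2`. -/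
theorem stmt_6 (k : ℕ) (hk : 2 ≤ k) (f : Polynomial ℤ)
    (hf : ∀ z : ℂ, z ≠ 0 → f.eval₂ (Int.castRingHom ℂ) (z + z⁻¹) = z ^ k + z⁻¹ ^ k) :
    {x : ℂ | f.eval₂ (Int.castRingHom ℂ) x = x}.ncard = k := by
  have hmap := aux_map_eq_dickson k f hf
  obtain ⟨hm, hd⟩ := aux_dickson_monic_deg (k-1)
  rw [show k - 1 + 1 = k by omega] at hm hd
  set g : ℂ[X] := dickson 1 (1:ℂ) k - X with hg
  have hgm : g.Monic := by
    apply hm.sub_of_left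
    apply degree_lt_degree
    rw [natDegree_X, hd]; omega
  have hgd : g.natDegree = k := by
    rw [hg, natDegree_sub_eq_left_of_natDegree_lt, hd]
    rw [natDegree_X, hd]; omega
  have hFix : {x : ℂ | f.eval₂ (Int.castRingHom ℂ) x = x} = ↑g.roots.toFinset := by
    ext x
    simp only [Set.mem_setOf_eq, Finset.coe_sort_coe, Multiset.mem_toFinset, Finset.mem_coe,
      mem_roots hgm.ne_zero, IsRoot.def, hg, eval_sub, eval_X, sub_eq_zero]
    rw [← eval_map, hmap]
    rw [mem_roots (show dickson 1 (1:ℂ) k - X ≠ 0 from hgm.ne_zero), IsRoot.def, eval_sub, eval_X, sub_eq_zero]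
  rw [hFix, Set.ncard_coe_finset]
  have hub : g.roots.toFinset.card ≤ k := by
    calc g.roots.toFinset.card ≤ Multiset.card g.roots := Multiset.toFinset_card_le _
      _ ≤ g.natDegree := card_roots' g
      _ = k := hgd
  -- lower bound
  set S : Finset ℝ := ((Finset.range ((k+1)/2+1)).image fun m : ℕ => (m:ℝ)/(k+1)) ∪
     ((Finset.Icc 1 ((k-2)/2)).image fun m : ℕ => (m:ℝ)/(k-1)) with hS
  have hkr : (2:ℝ) ≤ (k:ℝ) := by exact_mod_cast hk
  have hSbound : ∀ q ∈ S, 0 ≤ q ∧ q ≤ 1/2 := by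
    intro q hq
    rw [hS, Finset.mem_union] at hq
    rcases hq with hq | hq
    · obtain ⟨m, hm, rfl⟩ := Finset.mem_image.mp hq
      rw [Finset.mem_range] at hm
      have h2m : (2*m : ℝ) ≤ (k:ℝ)+1 := by
        have : 2*m ≤ k + 1 := by omega
        exact_mod_cast this
      constructor
      · positivity
      · rw [div_le_iff₀ (by positivity)]; linarith
    · obtain ⟨m, hm, rfl⟩ := Finset.mem_image.mp hq
      rw [Finset.mem_Icc] at hm
      have h2m : (2*m : ℝ) ≤ (k:ℝ)-1 := by
        have : 2*m ≤ k - 1 := by omega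
        calc (2*m:ℝ) = ((2*m:ℕ):ℝ) := by push_cast; ring
          _ ≤ ((k-1:ℕ):ℝ) := by exact_mod_cast this
          _ = (k:ℝ)-1 := by push_cast [Nat.cast_sub (by omega : 1 ≤ k)]; ring
      constructor
      · exact div_nonneg (by positivity) (by linarith)
      · rw [div_le_iff₀ (by linarith)]; linarith
  set φ : ℝ → ℂ := fun q => ((2 * Real.cos (2*π*q) : ℝ) : ℂ) with hφ
  have hφinj : Set.InjOn φ S := by
    intro a ha b hb h
    have ha' := hSbound a ha
    have hb' := hSbound b hb
    rw [hφ] at h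
    simp only [Complex.ofReal_inj] at h
    have hcos : Real.cos (2*π*a) = Real.cos (2*π*b) := by linarith
    have hπ := Real.pi_pos
    have := Real.injOn_cos (show 2*π*a ∈ Set.Icc 0 π from ⟨by nlinarith [ha'.1], by nlinarith [ha'.2]⟩)
      (show 2*π*b ∈ Set.Icc 0 π from ⟨by nlinarith [hb'.1], by nlinarith [hb'.2]⟩) hcos
    have h2π : (2*π) ≠ 0 := by positivity
    exact mul_left_cancel₀ h2π this
  have hmem : ∀ q ∈ S, φ q ∈ g.roots.toFinset := by
    intro q hq
    rw [Multiset.mem_toFinset, mem_roots hgm.ne_zero]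
    rw [hS, Finset.mem_union] at hq
    have hroot : ∃ (n : ℕ), (n = k - 1 ∨ n = k + 1) ∧ n ≠ 0 ∧ ∃ m : ℕ, q = (m:ℝ)/(n:ℝ) := by
      rcases hq with hq | hq
      · obtain ⟨m, _, rfl⟩ := Finset.mem_image.mp hq
        exact ⟨k+1, Or.inr rfl, by omega, m, by push_cast; ring⟩
      · obtain ⟨m, _, rfl⟩ := Finset.mem_image.mp hq
        refine ⟨k-1, Or.inl rfl, by omega, m, ?_⟩
        push_cast [Nat.cast_sub (by omega : 1 ≤ k)]
        ring
    obtain ⟨n, hn, hn0, m, rfl⟩ := hroot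
    set z : ℂ := Complex.exp (((2*π*((m:ℝ)/(n:ℝ)) : ℝ) : ℂ) * Complex.I) with hz
    have hz0 : z ≠ 0 := Complex.exp_ne_zero _
    have hzn : z ^ n = 1 := by
      rw [hz]
      have := aux_exp_root_unity n hn0 m
      convert this using 3
      push_cast
      ring
    have hφz : φ ((m:ℝ)/(n:ℝ)) = z + z⁻¹ := by
      rw [hφ, hz]
      exact aux_two_cos_eq (2*π*((m:ℝ)/(n:ℝ)))
    rw [IsRoot.def, hg, eval_sub, eval_X, sub_eq_zero, hφz]
    apply aux_dickson_fix k hk z hz0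
    rcases hn with hn | hn
    · left; rw [← hn]; exact hzn
    · right; rw [← hn]; exact hzn
  have hsub : S.image φ ⊆ g.roots.toFinset := by
    intro x hx
    obtain ⟨q, hq, rfl⟩ := Finset.mem_image.mp hx
    exact hmem q hq
  have hlb : k ≤ g.roots.toFinset.card := by
    calc k = S.card := (aux_Scard k hk).symm
      _ = (S.image φ).card := (Finset.card_image_of_injOn hφinj).symm
      _ ≤ g.roots.toFinset.card := Finset.card_le_card hsub
  omega
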